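/- For every ε with 0 < ε < 1 there exists a constant c > 0 (depending only on ε) such that for all natural numbers n ≥ 2 and t, t_e with 1 ≤ t + t_e ≤ n^{1−ε} and t + 1 ≤ n, every t-breaks t_e-edit-errors resilient code C ⊆ {0,1}^n has redundancy n − log₂|C| ≥ c·(t+t_e)·log₂ n. (Thus the existential construction of redundancy O((t+t_e)·log n·log log n) is near optimal when t + t_e = O(n^{1−ε}).) -/

import Mathlib

set_option maxHeartbeats 1000000

/-- Cost structure for the Levenshtein distance (removed from Mathlib; restored with its old meaning). -/
structure Levenshtein.Cost (α β δ : Type*) where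
  delete : α → δ
  insert : β → δ
  substitute : α → β → δ

/-- The default unit cost (restored from old Mathlib). -/
def Levenshtein.defaultCost {α : Type*} [DecidableEq α] : Levenshtein.Cost α α ℕ where
  delete _ := 1
  insert _ := 1
  substitute a b := if a = b then 0 else 1

/-- Levenshtein distance (removed from Mathlib; defined by the recursion old Mathlib proved for it). -/
def levenshtein {α β δ : Type*} [AddZeroClass δ] [Min δ] (C : Levenshtein.Cost α β δ) :
    List α → List β → δ
  | [], [] => 0
  | [], y :: ys => C.insert y + levenshtein C [] ys
  | x :: xs, [] => C.delete x + levenshtein C xs []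
  | x :: xs, y :: ys =>
    min (C.delete x + levenshtein C xs (y :: ys))
      (min (C.insert y + levenshtein C (x :: xs) ys) (C.substitute x y + levenshtein C xs ys))

/-- The edit (Levenshtein) distance between two binary words. -/
def editDist (x y : List Bool) : ℕ :=
  levenshtein Levenshtein.defaultCost x y

/-- The `t`-breaks `te`-edit-errors channel output set of a binary word `w`. -/
def BreakEdit (t te : ℕ) (w : List Bool) : Set (Multiset (List Bool)) :=
  { S | Multiset.card S = t + 1 ∧ (∀ f ∈ S, f ≠ []) ∧
      ∃ l : List (List Bool), (l : Multiset (List Bool)) = S ∧ editDist l.flatten w ≤ te }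

/-- A code is `t`-breaks `te`-edit-errors resilient if the channel output sets of
distinct codewords are disjoint. -/
def ResilientBE (t te : ℕ) (C : Finset (List Bool)) : Prop :=
  ∀ c ∈ C, ∀ c' ∈ C, c ≠ c' → BreakEdit t te c ∩ BreakEdit t te c' = ∅

@[simp] lemma levenshtein_nil_nil {α β δ : Type*} [AddZeroClass δ] [Min δ]
    {C : Levenshtein.Cost α β δ} : levenshtein C [] [] = 0 := by rw [levenshtein]

@[simp] lemma levenshtein_nil_cons {α β δ : Type*} [AddZeroClass δ] [Min δ]
    {C : Levenshtein.Cost α β δ} (y : β) (ys : List β) :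
    levenshtein C [] (y :: ys) = C.insert y + levenshtein C [] ys := by rw [levenshtein]

@[simp] lemma levenshtein_cons_nil {α β δ : Type*} [AddZeroClass δ] [Min δ]
    {C : Levenshtein.Cost α β δ} (x : α) (xs : List α) :
    levenshtein C (x :: xs) [] = C.delete x + levenshtein C xs [] := by rw [levenshtein]

@[simp] lemma levenshtein_cons_cons {α β δ : Type*} [AddZeroClass δ] [Min δ]
    {C : Levenshtein.Cost α β δ} (x : α) (xs : List α) (y : β) (ys : List β) :
    levenshtein C (x :: xs) (y :: ys) =
      min (C.delete x + levenshtein C xs (y :: ys))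
        (min (C.insert y + levenshtein C (x :: xs) ys) (C.substitute x y + levenshtein C xs ys)) := by
  rw [levenshtein]

open List

lemma editDist_self (w : List Bool) : editDist w w = 0 := by
  induction w with
  | nil => simp [editDist]
  | cons a w ih =>
    have h := levenshtein_cons_cons (C := Levenshtein.defaultCost) a w a w
    have h2 : editDist (a :: w) (a :: w) ≤ 0 := by
      rw [editDist, h]
      refine le_trans (min_le_right _ _) (le_trans (min_le_right _ _) ?_)
      simp [Levenshtein.defaultCost, editDist] at ih ⊢
      omega
    omega

lemma editDist_cons_cons_le (a b : Bool) (x y : List Bool) :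
    editDist (a :: x) (b :: y) ≤ (if a = b then 0 else 1) + editDist x y := by
  rw [editDist, levenshtein_cons_cons]
  refine le_trans (min_le_right _ _) (le_trans (min_le_right _ _) ?_)
  simp [Levenshtein.defaultCost, editDist]

lemma editDist_le_hamming : ∀ (m : ℕ) (f g : Fin m → Bool),
    editDist (List.ofFn f) (List.ofFn g) ≤ (Finset.univ.filter (fun i => f i ≠ g i)).card := by
  intro m
  induction m with
  | zero => intro f g; simp [editDist]
  | succ m ih =>
    intro f g
    rw [List.ofFn_succ, List.ofFn_succ]
    refine le_trans (editDist_cons_cons_le _ _ _ _) ?_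
    have hc : (Finset.univ.filter (fun i => f i ≠ g i)).card
        = (if f 0 ≠ g 0 then 1 else 0) +
          (Finset.univ.filter (fun i : Fin m => f i.succ ≠ g i.succ)).card := by
      rw [Finset.card_filter, Finset.card_filter, Fin.sum_univ_succ]
    rw [hc]
    have := ih (fun i => f i.succ) (fun i => g i.succ)
    by_cases h : f 0 = g 0 <;> simp [h] at * <;> omega

lemma editDist_append_last_le (u : List Bool) (a b : Bool) :
    editDist (u ++ [a]) (u ++ [b]) ≤ 1 := by
  induction u with
  | nil =>
    refine le_trans (editDist_cons_cons_le a b [] []) ?_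
    simp [editDist]
    split <;> simp
  | cons c u ih =>
    simpa using le_trans (editDist_cons_cons_le c c (u ++ [a]) (u ++ [b])) (by simpa using ih)


lemma exists_big_frag : ∀ (m : List (List Bool)), (∀ f ∈ m, f ≠ []) →
    m.length < m.flatten.length → ∃ x f y, m = x ++ f :: y ∧ 2 ≤ f.length := by
  intro m
  induction m with
  | nil => intro _ h; simp at h
  | cons f m ih =>
    intro hne hlen
    by_cases hf : 2 ≤ f.length
    · exact ⟨[], f, m, rfl, hf⟩
    · have hf1 : f.length = 1 := by
        have := hne f (by simp)
        have : f.length ≠ 0 := by simpa [List.length_eq_zero_iff] using this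
        omega
      have hlen' : m.length < m.flatten.length := by
        simp [List.flatten_cons, hf1] at hlen ⊢
        omega
      obtain ⟨x, g, y, hxy, hg⟩ := ih (fun f hf => hne f (by simp [hf])) hlen'
      exact ⟨f :: x, g, y, by simp [hxy], hg⟩

lemma pad : ∀ (d : ℕ) (l l' : List (List Bool)), l.Perm l' → (∀ f ∈ l, f ≠ []) →
    l.length + d ≤ l.flatten.length →
    ∃ m m' : List (List Bool), m.Perm m' ∧ (∀ f ∈ m, f ≠ []) ∧
      m.flatten = l.flatten ∧ m'.flatten = l'.flatten ∧ m.length = l.length + d := by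
  intro d
  induction d with
  | zero => intro l l' hp hne _; exact ⟨l, l', hp, hne, rfl, rfl, by omega⟩
  | succ d ih =>
    intro l l' hp hne hlen
    obtain ⟨m, m', hmp, hmne, hmf, hmf', hml⟩ := ih l l' hp hne (by omega)
    have hlt : m.length < m.flatten.length := by rw [hmf]; omega
    obtain ⟨x, f, y, hxy, hf⟩ := exists_big_frag m hmne hlt
    obtain ⟨a, f₂, hfa⟩ : ∃ a f₂, f = a :: f₂ := by
      cases f with
      | nil => simp at hf
      | cons a f₂ => exact ⟨a, f₂, rfl⟩
    have hf₂ : f₂ ≠ [] := by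
      intro h; rw [hfa, h] at hf; simp at hf
    have hfm' : f ∈ m' := (hmp.mem_iff).1 (by simp [hxy])
    obtain ⟨x', y', hxy'⟩ := List.append_of_mem hfm'
    -- new lists
    refine ⟨x ++ [a] :: f₂ :: y, x' ++ [a] :: f₂ :: y', ?_, ?_, ?_, ?_, ?_⟩
    · -- perm
      have h1 : (x ++ [a] :: f₂ :: y).Perm ([a] :: f₂ :: (x ++ y)) := by
        refine List.perm_middle.trans ?_
        exact (List.perm_middle (a := f₂) (l₁ := x) (l₂ := y)).cons _
      have h2 : (x' ++ [a] :: f₂ :: y').Perm ([a] :: f₂ :: (x' ++ y')) := by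
        refine List.perm_middle.trans ?_
        exact (List.perm_middle (a := f₂) (l₁ := x') (l₂ := y')).cons _
      have hxyp : (x ++ y).Perm (x' ++ y') := by
        have e1 : m.Perm (f :: (x ++ y)) := by rw [hxy]; exact List.perm_middle
        have e2 : m'.Perm (f :: (x' ++ y')) := by rw [hxy']; exact List.perm_middle
        exact (e1.symm.trans (hmp.trans e2)).cons_inv
      exact h1.trans (((hxyp.cons f₂).cons [a]).trans h2.symm)
    · intro g hg
      simp only [List.mem_append, List.mem_cons] at hg
      rcases hg with h | h | h | h
      · exact hmne g (by simp [hxy, h])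
      · subst h; simp
      · subst h; exact hf₂
      · exact hmne g (by simp [hxy, h])
    · rw [hmf.symm, hxy]; simp [hfa]
    · rw [hmf'.symm, hxy']; simp [hfa]
    · simp [hxy] at hml ⊢; omega

lemma key {t te : ℕ} {C : Finset (List Bool)} (hres : ResilientBE t te C)
    {c c' : List Bool} (hc : c ∈ C) (hc' : c' ∈ C)
    (l l' : List (List Bool)) (hp : l.Perm l') (hne : ∀ f ∈ l, f ≠ [])
    (hl1 : 1 ≤ l.length) (hl2 : l.length ≤ t + 1) (hw : t + 1 ≤ l.flatten.length)
    (he : editDist l.flatten c ≤ te) (he' : editDist l'.flatten c' ≤ te) : c = c' := by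
  by_contra hne'
  obtain ⟨m, m', hmp, hmne, hmf, hmf', hml⟩ :=
    pad (t + 1 - l.length) l l' hp hne (by omega)
  have hS : ((m : Multiset (List Bool)) : Multiset (List Bool)) ∈ BreakEdit t te c ∩ BreakEdit t te c' := by
    constructor
    · refine ⟨by simp [hml]; omega, ?_, m, rfl, by rw [hmf]; exact he⟩
      intro f hf
      exact hmne f (by simpa using hf)
    · refine ⟨by simp [hml]; omega, ?_, m', ?_, by rw [hmf']; exact he'⟩
      · intro f hf
        exact hmne f (by simpa using hf)
      · exact Multiset.coe_eq_coe.2 hmp.symm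
  have := hres c hc c' hc' hne'
  rw [this] at hS
  exact hS


section CaseA
variable (n : ℕ)

/-- encode a length-n word as a function -/
def enc (c : List Bool) : Fin n → Bool := fun i => c.getD i.val false

lemma enc_spec {c : List Bool} (h : c.length = n) : List.ofFn (enc n c) = c := by
  apply List.ext_getElem (by simp [h])
  intro i h1 h2
  simp [enc, List.getD_eq_getElem?_getD, List.getElem?_eq_getElem h2]

def ball (te : ℕ) (c : List Bool) : Finset (Fin n → Bool) :=
  (Finset.univ.powersetCard te).image
    (fun S : Finset (Fin n) => fun i => if i ∈ S then !(enc n c i) else enc n c i)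

lemma card_ball (te : ℕ) (c : List Bool) : (ball n te c).card = n.choose te := by
  rw [ball, Finset.card_image_of_injOn, Finset.card_powersetCard, Finset.card_univ,
    Fintype.card_fin]
  intro S _ S' _ h
  ext i
  have := congrFun h i
  by_cases h1 : i ∈ S <;> by_cases h2 : i ∈ S' <;> simp [h1, h2] at this ⊢ <;>
    cases (enc n c i) <;> simp_all

lemma editDist_mem_ball {te : ℕ} {c : List Bool} (h : c.length = n)
    {g : Fin n → Bool} (hg : g ∈ ball n te c) : editDist (List.ofFn g) c ≤ te := by
  obtain ⟨S, hS, hgS⟩ := Finset.mem_image.1 hg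
  obtain ⟨-, hcard⟩ := Finset.mem_powersetCard.1 hS
  subst hgS
  have h1 : editDist (List.ofFn (fun i => if i ∈ S then !(enc n c i) else enc n c i))
      (List.ofFn (enc n c)) ≤ te := by
    refine le_trans (editDist_le_hamming n _ _) (le_trans (Finset.card_le_card ?_) hcard.le)
    intro i hi
    simp only [Finset.mem_filter] at hi
    by_contra hiS
    simp [hiS] at hi
  rwa [enc_spec n h] at h1

lemma caseA {n t te : ℕ} (hn : t + 1 ≤ n) (C : Finset (List Bool))
    (hlen : ∀ w ∈ C, w.length = n) (hres : ResilientBE t te C) :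
    C.card * n.choose te ≤ 2 ^ n := by
  classical
  have hdisj : ∀ c ∈ C, ∀ c' ∈ C, c ≠ c' → Disjoint (ball n te c) (ball n te c') := by
    intro c hc c' hc' hcc
    rw [Finset.disjoint_left]
    intro g hg hg'
    apply hcc
    have h1 : editDist (List.ofFn g) c ≤ te := editDist_mem_ball n (hlen c hc) hg
    have h2 : editDist (List.ofFn g) c' ≤ te := editDist_mem_ball n (hlen c' hc') hg'
    have hg_len : (List.ofFn g).length = n := by simp
    set l₀ : List (List Bool) :=
      (((List.ofFn g).take t).map (fun b => [b])) ++ [(List.ofFn g).drop t] with hl₀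
    have hfl : l₀.flatten = List.ofFn g := by
      rw [hl₀]
      simp only [List.flatten_append, List.flatten_cons, List.flatten_nil, List.append_nil]
      rw [show (((List.ofFn g).take t).map fun b => [b]).flatten = (List.ofFn g).take t by
        induction ((List.ofFn g).take t) with
        | nil => simp
        | cons a l ih => simp [ih]]
      exact List.take_append_drop t (List.ofFn g)
    have hlen₀ : l₀.length = t + 1 := by
      rw [hl₀]
      simp [List.length_take]
      omega
    refine key hres hc hc' l₀ l₀ (List.Perm.refl _) ?_ (by omega) (by omega)
      (by rw [hfl]; simpa using hn) (by rw [hfl]; exact h1) (by rw [hfl]; exact h2)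
    intro f hf
    rw [hl₀] at hf
    simp only [List.mem_append, List.mem_map, List.mem_singleton] at hf
    rcases hf with ⟨b, _, rfl⟩ | rfl
    · simp
    · intro hd
      have := congrArg List.length hd
      simp at this
      omega
  calc C.card * n.choose te = ∑ c ∈ C, (ball n te c).card := by
        rw [Finset.sum_congr rfl (fun c _ => card_ball n te c), Finset.sum_const, smul_eq_mul]
    _ = (C.biUnion (ball n te)).card := (Finset.card_biUnion hdisj).symm
    _ ≤ Fintype.card (Fin n → Bool) := Finset.card_le_univ _
    _ = 2 ^ n := by simp


def WL (L : ℕ) : Finset (List Bool) := (Finset.univ : Finset (Fin L → Bool)).image List.ofFn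

lemma mem_WL {L : ℕ} {u : List Bool} : u ∈ WL L ↔ u.length = L := by
  constructor
  · intro h
    obtain ⟨f, _, rfl⟩ := Finset.mem_image.1 h
    simp
  · intro h
    refine Finset.mem_image.2 ⟨fun i => u.getD i.val false, Finset.mem_univ _, ?_⟩
    apply List.ext_getElem (by simp [h])
    intro i h1 h2
    simp [List.getD_eq_getElem, h, h2]

lemma card_WL (L : ℕ) : (WL L).card = 2 ^ L := by
  rw [WL, Finset.card_image_of_injective _ List.ofFn_injective, Finset.card_univ]
  simp

lemma getD_rotate (u : List Bool) (z m : ℕ) (hm : m < u.length) :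
    (u.rotate z).getD m false = u.getD ((m + z) % u.length) false := by
  have h1 : m < (u.rotate z).length := by simpa using hm
  rw [List.getD_eq_getElem _ _ h1,
    List.getD_eq_getElem _ _ (Nat.mod_lt _ (by omega)), List.getElem_rotate]

lemma card_fix {L z : ℕ} (hz0 : 0 < z) (hzL : z < L) :
    ((WL L).filter (fun u => u.rotate z = u)).card ≤ 2 ^ (L / 2) := by
  classical
  have hL : 0 < L := lt_trans hz0 hzL
  haveI : NeZero L := ⟨hL.ne'⟩
  set z' : ZMod L := (z : ZMod L) with hz'
  have hz'val : z'.val = z := by rw [hz', ZMod.val_natCast]; exact Nat.mod_eq_of_lt hzL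
  have hz'ne : z' ≠ 0 := by
    intro h; rw [h, ZMod.val_zero] at hz'val; omega
  set Inv : Finset (ZMod L → Bool) :=
    Finset.univ.filter (fun v => ∀ i, v (i + z') = v i) with hInv
  have step1 : ((WL L).filter (fun u => u.rotate z = u)).card ≤ Inv.card := by
    apply Finset.card_le_card_of_injOn (fun u => fun i : ZMod L => u.getD i.val false)
    · intro u hu
      simp only [Finset.mem_coe, Finset.mem_filter] at hu
      obtain ⟨huW, hrot⟩ := hu
      have hulen : u.length = L := mem_WL.1 huW
      simp only [hInv, Finset.mem_coe, Finset.mem_filter, Finset.mem_univ, true_and]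
      intro i
      have hi : i.val < L := i.val_lt
      have hiz : (i + z').val = (i.val + z) % L := by rw [ZMod.val_add, hz'val]
      show u.getD ((i + z').val) false = u.getD i.val false
      rw [hiz]
      have h0 := getD_rotate u z i.val (by omega)
      rw [hrot, hulen] at h0
      exact h0.symm
    · intro u hu u' hu' h
      simp only [Finset.mem_coe, Finset.mem_filter] at hu hu'
      have h1 : u.length = L := mem_WL.1 hu.1
      have h2 : u'.length = L := mem_WL.1 hu'.1
      apply List.ext_getElem (by omega)
      intro m hm hm'
      have := congrFun h (m : ZMod L)
      have hval : ((m : ZMod L)).val = m := by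
        rw [ZMod.val_natCast]; exact Nat.mod_eq_of_lt (by omega)
      simp only [hval] at this
      rwa [List.getD_eq_getElem _ _ hm, List.getD_eq_getElem _ _ hm'] at this
  refine le_trans step1 ?_
  -- now bound Inv.card
  set H := AddSubgroup.zmultiples z' with hH
  have hinv' : ∀ v ∈ Inv, ∀ (i h : ZMod L), h ∈ H → v (i + h) = v i := by
    intro v hv i h hh
    simp only [hInv, Finset.mem_filter, Finset.mem_univ, true_and] at hv
    have hums : h ∈ AddSubmonoid.multiples z' := by
      rwa [mem_multiples_iff_mem_zmultiples]
    obtain ⟨k, hk⟩ := hums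
    have hk' : ∀ (k : ℕ) (j : ZMod L), v (j + k • z') = v j := by
      intro k
      induction k with
      | zero => intro j; simp
      | succ k ih =>
        intro j
        have hs : (k + 1) • z' = k • z' + z' := by rw [add_smul, one_smul]
        rw [hs, ← add_assoc, hv (j + k • z')]
        exact ih j
    rw [show h = k • z' from hk.symm]
    exact hk' k i
  haveI : Fintype (ZMod L ⧸ H) := Fintype.ofFinite _
  have hcard2 : Fintype.card (ZMod L ⧸ H) ≤ L / 2 := by
    have h1 : Nat.card H * H.index = Nat.card (ZMod L) := AddSubgroup.card_mul_index H
    have h2 : Nat.card (ZMod L) = L := Nat.card_zmod L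
    have h3 : Nat.card H = addOrderOf z' := Nat.card_zmultiples z'
    have h4 : 2 ≤ addOrderOf z' := by
      by_contra hlt
      push_neg at hlt
      have hpos : 0 < addOrderOf z' := addOrderOf_pos z'
      have h1' : addOrderOf z' = 1 := by omega
      have : addOrderOf z' = 1 ↔ z' = 0 := AddMonoid.addOrderOf_eq_one_iff
      exact hz'ne (this.1 h1')
    have h5 : H.index = Nat.card (ZMod L ⧸ H) := AddSubgroup.index_eq_card H
    have h6 : Nat.card (ZMod L ⧸ H) = Fintype.card (ZMod L ⧸ H) := Nat.card_eq_fintype_card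
    rw [h3] at h1
    rw [h2] at h1
    rw [h5, h6] at h1
    have : Fintype.card (ZMod L ⧸ H) * 2 ≤ L := by
      calc Fintype.card (ZMod L ⧸ H) * 2 ≤ Fintype.card (ZMod L ⧸ H) * addOrderOf z' :=
            Nat.mul_le_mul_left _ h4
        _ = L := by rw [mul_comm]; exact h1
    omega
  have step2 : Inv.card ≤ 2 ^ (L / 2) := by
    have hinj : Inv.card ≤ (Finset.univ : Finset ((ZMod L ⧸ H) → Bool)).card := by
      apply Finset.card_le_card_of_injOn (fun v => fun q : ZMod L ⧸ H => v q.out)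
      · intro v _; exact Finset.mem_univ _
      · intro v hv v' hv' h
        rw [Finset.mem_coe] at hv hv'
        funext i
        have h1 := congrFun h (QuotientAddGroup.mk (s := H) i)
        dsimp only at h1
        have recov : ∀ w : ZMod L → Bool, w ∈ Inv →
            w ((QuotientAddGroup.mk (s := H) i).out) = w i := by
          intro w hw
          have hmem : -(QuotientAddGroup.mk (s := H) i).out + i ∈ H := by
            rw [← QuotientAddGroup.eq]
            exact Quotient.out_eq _
          have := hinv' w hw ((QuotientAddGroup.mk (s := H) i).out)
            (-(QuotientAddGroup.mk (s := H) i).out + i) hmem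
          rw [add_neg_cancel_left] at this
          exact this.symm
        rw [← recov v hv, ← recov v' hv']
        exact h1
    refine le_trans hinj ?_
    rw [Finset.card_univ, Fintype.card_fun]
    calc (2:ℕ) ^ Fintype.card (ZMod L ⧸ H) ≤ 2 ^ (L/2) :=
      Nat.pow_le_pow_right (by norm_num) hcard2
    _ = 2 ^ (L/2) := rfl
  exact step2


def orb (u : List Bool) : Finset (List Bool) := (Finset.range u.length).image (u.rotate ·)

lemma mem_orb {u x : List Bool} (hu : u ≠ []) : x ∈ orb u ↔ u.IsRotated x := by
  constructor
  · intro h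
    obtain ⟨i, _, rfl⟩ := Finset.mem_image.1 h
    exact ⟨i, rfl⟩
  · rintro ⟨i, rfl⟩
    refine Finset.mem_image.2 ⟨i % u.length,
      Finset.mem_range.2 (Nat.mod_lt _ (List.length_pos_iff.2 hu)), ?_⟩
    rw [List.rotate_mod]

noncomputable def rep (u : List Bool) : List Bool :=
  if h : (orb u).Nonempty then (orb u).min' h else []

lemma orb_nonempty {u : List Bool} (hu : u ≠ []) : (orb u).Nonempty := by
  exact ⟨u, (mem_orb hu).2 (List.IsRotated.refl u)⟩

lemma rep_isRotated {u : List Bool} (hu : u ≠ []) : u.IsRotated (rep u) := by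
  rw [rep, dif_pos (orb_nonempty hu)]
  exact (mem_orb hu).1 (Finset.min'_mem _ _)

lemma orb_congr {u u' : List Bool} (hu : u ≠ []) (h : u.IsRotated u') : orb u = orb u' := by
  have hu' : u' ≠ [] := by
    intro he
    rw [he, List.isRotated_nil_iff] at h
    exact hu h
  ext x
  rw [mem_orb hu, mem_orb hu']
  exact ⟨fun hx => h.symm.trans hx, fun hx => h.trans hx⟩

lemma rep_congr {u u' : List Bool} (h : u.IsRotated u') : rep u = rep u' := by
  by_cases hu : u = []
  · subst hu
    rw [List.isRotated_nil_iff'] at h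
    rw [← h]
  · rw [rep, rep, orb_congr hu h]

lemma isRotated_of_rep_eq {u u' : List Bool} (hu : u ≠ []) (hu' : u' ≠ [])
    (h : rep u = rep u') : u.IsRotated u' := by
  exact (rep_isRotated hu).trans (h ▸ (rep_isRotated hu').symm)

noncomputable def QL (L : ℕ) : Finset (List Bool) := (WL L).image rep

lemma rep_mem_QL {L : ℕ} {u : List Bool} (hu : u.length = L) : rep u ∈ QL L :=
  Finset.mem_image.2 ⟨u, mem_WL.2 hu, rfl⟩

lemma card_QL {L : ℕ} (hL : 0 < L) : (QL L).card ≤ 2 ^ L / L + L * 2 ^ (L / 2) := by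
  classical
  have hsum : ∑ q ∈ QL L, ((WL L).filter (fun u => rep u = q)).card = (WL L).card :=
    (Finset.card_eq_sum_card_image rep (WL L)).symm
  set big := (QL L).filter (fun q => L ≤ ((WL L).filter (fun u => rep u = q)).card) with hbig
  set small := (QL L).filter (fun q => ¬ L ≤ ((WL L).filter (fun u => rep u = q)).card)
    with hsmall
  have hsplit : big.card + small.card = (QL L).card :=
    Finset.card_filter_add_card_filter_not _
  have hbigcard : big.card ≤ 2 ^ L / L := by
    rw [Nat.le_div_iff_mul_le hL]
    calc big.card * L = ∑ _q ∈ big, L := by rw [Finset.sum_const, smul_eq_mul]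
      _ ≤ ∑ q ∈ big, ((WL L).filter (fun u => rep u = q)).card := by
          apply Finset.sum_le_sum
          intro q hq
          exact (Finset.mem_filter.1 hq).2
      _ ≤ ∑ q ∈ QL L, ((WL L).filter (fun u => rep u = q)).card :=
          Finset.sum_le_sum_of_subset (Finset.filter_subset _ _)
      _ = 2 ^ L := by rw [hsum, card_WL]
  have hsmallsub : small ⊆ (Finset.Ioo 0 L).biUnion
      (fun z => (WL L).filter (fun u => u.rotate z = u)) := by
    intro q hq
    rw [hsmall, Finset.mem_filter] at hq
    obtain ⟨hqQL, hsm⟩ := hq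
    obtain ⟨u, huW, hqu⟩ := Finset.mem_image.1 hqQL
    have hulen : u.length = L := mem_WL.1 huW
    have hune : u ≠ [] := by
      intro he; rw [he] at hulen; simp at hulen; omega
    have hqrot : u.IsRotated q := by rw [← hqu]; exact rep_isRotated hune
    have hqlen : q.length = L := by rw [← hqrot.perm.length_eq]; exact hulen
    have hqne : q ≠ [] := by
      intro he; rw [he] at hqlen; simp at hqlen; omega
    have hrepq : rep q = q := by
      rw [← rep_congr hqrot]; exact hqu
    -- find self-rotation
    have e3 : ∀ s, q.rotate (s + L) = q.rotate s := by
      intro s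
      have h1 : (q.rotate s).rotate ((q.rotate s).length) = q.rotate s := List.rotate_length _
      rw [List.length_rotate, hqlen] at h1
      rw [List.rotate_rotate] at h1
      exact h1
    have hkey : ∀ i j, i < j → j < L → q.rotate i = q.rotate j → q.rotate (j - i) = q := by
      intro i j hlt hj hij
      have e2 : (q.rotate i).rotate (L - i) = q := by
        rw [List.rotate_rotate, show i + (L - i) = L by omega, ← hqlen, List.rotate_length]
      have e1 : (q.rotate j).rotate (L - i) = q.rotate (j - i) := by
        rw [List.rotate_rotate, show j + (L - i) = (j - i) + L by omega]
        exact e3 (j - i)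
      rw [← e1, ← hij]
      exact e2
    have hex : ∃ z, 0 < z ∧ z < L ∧ q.rotate z = q := by
      by_contra hno
      push_neg at hno
      have hinj : Set.InjOn (q.rotate ·) (Finset.range L) := by
        intro i hi j hj hij
        simp only [Finset.coe_range, Set.mem_Iio] at hi hj
        dsimp only at hij
        by_contra hne2
        rcases Nat.lt_or_ge i j with hlt | hge
        · exact hno (j - i) (by omega) (by omega) (hkey i j hlt hj hij)
        · have hlt : j < i := by omega
          exact hno (i - j) (by omega) (by omega) (hkey j i hlt hi hij.symm)
      have himg : (Finset.range L).image (q.rotate ·) ⊆ (WL L).filter (fun u => rep u = q) := by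
        intro v hv
        obtain ⟨i, _, rfl⟩ := Finset.mem_image.1 hv
        refine Finset.mem_filter.2 ⟨mem_WL.2 (by rw [List.length_rotate]; exact hqlen), ?_⟩
        rw [← rep_congr ⟨i, rfl⟩]
        exact hrepq
      have hcard : L ≤ ((WL L).filter (fun u => rep u = q)).card := by
        calc L = ((Finset.range L).image (q.rotate ·)).card := by
              rw [Finset.card_image_of_injOn hinj, Finset.card_range]
          _ ≤ _ := Finset.card_le_card himg
      exact hsm hcard
    obtain ⟨z, hz0, hzL, hz⟩ := hex
    refine Finset.mem_biUnion.2 ⟨z, Finset.mem_Ioo.2 ⟨hz0, hzL⟩, Finset.mem_filter.2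
      ⟨mem_WL.2 hqlen, hz⟩⟩
  have hsmallcard : small.card ≤ L * 2 ^ (L / 2) := by
    calc small.card ≤ _ := Finset.card_le_card hsmallsub
      _ ≤ ∑ z ∈ Finset.Ioo 0 L, ((WL L).filter (fun u => u.rotate z = u)).card :=
          Finset.card_biUnion_le
      _ ≤ ∑ _z ∈ Finset.Ioo 0 L, 2 ^ (L / 2) := by
          apply Finset.sum_le_sum
          intro z hz
          obtain ⟨hz0, hzL⟩ := Finset.mem_Ioo.1 hz
          exact card_fix hz0 hzL
      _ ≤ L * 2 ^ (L / 2) := by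
          rw [Finset.sum_const, smul_eq_mul, Nat.card_Ioo]
          exact Nat.mul_le_mul_right _ (by omega)
  omega


def chunks (L : ℕ) : ℕ → List Bool → List (List Bool)
  | 0, _ => []
  | (k+1), c => c.take L :: chunks L k (c.drop L)

lemma chunks_length (L : ℕ) : ∀ (k : ℕ) (c : List Bool), (chunks L k c).length = k := by
  intro k
  induction k with
  | zero => intro c; rfl
  | succ k ih => intro c; simp [chunks, ih]

lemma chunks_flatten (L : ℕ) : ∀ (k : ℕ) (c : List Bool),
    (chunks L k c).flatten = c.take (k * L) := by
  intro k
  induction k with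
  | zero => intro c; simp [chunks]
  | succ k ih =>
    intro c
    rw [chunks, List.flatten_cons, ih]
    rw [show (k+1) * L = L + k * L by ring, List.take_add]

lemma chunks_forall₂ (L : ℕ) : ∀ (k : ℕ) (c c' : List Bool),
    (∀ m, m < k → ((c.drop (m*L)).take L).IsRotated ((c'.drop (m*L)).take L)) →
    List.Forall₂ List.IsRotated (chunks L k c) (chunks L k c') := by
  intro k
  induction k with
  | zero => intro c c' _; exact List.Forall₂.nil
  | succ k ih =>
    intro c c' h
    refine List.Forall₂.cons ?_ (ih _ _ ?_)
    · have := h 0 (by omega)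
      simpa using this
    · intro m hm
      rw [List.drop_drop, List.drop_drop, show L + m * L = (m+1) * L by ring]
      exact h (m+1) (by omega)

lemma chunks_nonempty (L : ℕ) (hL : 0 < L) : ∀ (k : ℕ) (c : List Bool), k * L ≤ c.length →
    ∀ u ∈ chunks L k c, u ≠ [] := by
  intro k
  induction k with
  | zero => intro c _ u hu; simp [chunks] at hu
  | succ k ih =>
    intro c hlen u hu
    rw [chunks, List.mem_cons] at hu
    have hsm : (k+1) * L = k * L + L := by ring
    rw [hsm] at hlen
    rcases hu with rfl | hu
    · intro he
      have h2 := congrArg List.length he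
      simp only [List.length_take, List.length_nil] at h2
      rw [Nat.min_eq_left (by omega)] at h2
      omega
    · refine ih (c.drop L) ?_ u hu
      simp only [List.length_drop]
      omega

lemma segs : ∀ (U U' : List (List Bool)), List.Forall₂ List.IsRotated U U' →
    (∀ u ∈ U, u ≠ []) →
    ∃ l l' : List (List Bool), l.Perm l' ∧ (∀ f ∈ l, f ≠ []) ∧
      l.flatten = U.flatten ∧ l'.flatten = U'.flatten ∧
      U.length ≤ l.length ∧ l.length ≤ 2 * U.length := by
  intro U U' h
  induction h with
  | nil => intro _; exact ⟨[], [], List.Perm.refl _, by simp, rfl, rfl, le_refl 0, by simp⟩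
  | @cons u u' U₀ U₀' hr hrest ih =>
    intro hne
    obtain ⟨l0, l0', hp, hn0, hf, hf', hlb, hub⟩ :=
      ih (fun x hx => hne x (List.mem_cons_of_mem _ hx))
    have hu : u ≠ [] := hne u List.mem_cons_self
    by_cases heq : u = u'
    · refine ⟨u :: l0, u' :: l0', ?_, ?_, ?_, ?_, ?_, ?_⟩
      · rw [heq]; exact hp.cons u'
      · intro f hf2
        rcases List.mem_cons.1 hf2 with rfl | hf2
        · exact hu
        · exact hn0 f hf2
      · simp [hf]
      · simp [hf']
      · simp; omega
      · simp; omega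
    · obtain ⟨i, hiu⟩ := hr
      set i' := i % u.length with hi'
      have hiu' : u.rotate i' = u' := by rw [hi', List.rotate_mod]; exact hiu
      have hlen0 : 0 < u.length := List.length_pos_iff.2 hu
      have hi'lt : i' < u.length := Nat.mod_lt _ hlen0
      have hi'pos : 0 < i' := by
        rcases Nat.eq_zero_or_pos i' with h0 | h
        · rw [h0, List.rotate_zero] at hiu'; exact absurd hiu' heq
        · exact h
      have hu' : u' = u.drop i' ++ u.take i' := by
        rw [← hiu', List.rotate_eq_drop_append_take hi'lt.le]
      refine ⟨u.take i' :: u.drop i' :: l0, u.drop i' :: u.take i' :: l0', ?_, ?_, ?_, ?_, ?_, ?_⟩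
      · exact (List.Perm.swap _ _ _).trans ((hp.cons _).cons _)
      · intro f hf2
        rcases List.mem_cons.1 hf2 with rfl | hf2
        · intro he
          have := congrArg List.length he
          simp only [List.length_take, List.length_nil] at this
          omega
        rcases List.mem_cons.1 hf2 with rfl | hf2
        · intro he
          have := congrArg List.length he
          simp only [List.length_drop, List.length_nil] at this
          omega
        · exact hn0 f hf2
      · simp only [List.flatten_cons, hf]
        rw [← List.append_assoc, List.take_append_drop]
      · simp only [List.flatten_cons, hf']
        rw [← List.append_assoc, ← hu']
      · simp; omega
      · simp; omega

lemma caseB {n t te k L : ℕ} (C : Finset (List Bool)) (ht : 1 ≤ t) (hn : t + 1 ≤ n)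
    (hk1 : 1 ≤ k) (hL1 : 1 ≤ L) (hkL : k * L ≤ n)
    (hfrag : 2 * k ≤ t ∨ (k = 1 ∧ n = L))
    (hlen : ∀ w ∈ C, w.length = n) (hres : ResilientBE t te C) :
    C.card ≤ (QL L).card ^ k * 2 ^ (n - k * L) := by
  classical
  set Φ : List Bool → (Fin k → List Bool) × List Bool :=
    fun c => (fun m : Fin k => rep ((c.drop (m.val * L)).take L), c.drop (k * L)) with hΦ
  have hseg_len : ∀ c ∈ C, ∀ m : ℕ, m < k → ((c.drop (m*L)).take L).length = L := by
    intro c hc m hm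
    have hcl : c.length = n := hlen c hc
    simp only [List.length_take, List.length_drop, hcl]
    have h1 : (m+1) * L ≤ k * L := Nat.mul_le_mul_right _ (by omega)
    have h2 : (m+1) * L = m * L + L := by ring
    apply Nat.min_eq_left
    omega
  have himg : ∀ c ∈ C, Φ c ∈ (Fintype.piFinset fun _ : Fin k => QL L) ×ˢ WL (n - k * L) := by
    intro c hc
    refine Finset.mem_product.2 ⟨Fintype.mem_piFinset.2 ?_, ?_⟩
    · intro m
      exact rep_mem_QL (hseg_len c hc m.val m.isLt)
    · rw [mem_WL]
      simp [hΦ, hlen c hc]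
  have hinj : Set.InjOn Φ C := by
    intro c hc c' hc' heq
    rw [Finset.mem_coe] at hc hc'
    rw [hΦ] at heq
    simp only [Prod.mk.injEq] at heq
    obtain ⟨hseg, hrem⟩ := heq
    -- rotations per segment
    have hrot : ∀ m, m < k → ((c.drop (m*L)).take L).IsRotated ((c'.drop (m*L)).take L) := by
      intro m hm
      apply isRotated_of_rep_eq
      · intro he
        have := congrArg List.length he
        rw [hseg_len c hc m hm] at this
        simp at this; omega
      · intro he
        have := congrArg List.length he
        rw [hseg_len c' hc' m hm] at this
        simp at this; omega
      · exact congrFun hseg ⟨m, hm⟩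
    have hF : List.Forall₂ List.IsRotated (chunks L k c) (chunks L k c') :=
      chunks_forall₂ L k c c' hrot
    have hCne : ∀ u ∈ chunks L k c, u ≠ [] :=
      chunks_nonempty L (by omega) k c (by rw [hlen c hc]; exact hkL)
    obtain ⟨l0, l0', hp, hn0, hfl, hfl', hlb, hub⟩ := segs _ _ hF hCne
    rw [chunks_flatten] at hfl hfl'
    rw [chunks_length] at hlb hub
    set r := c.drop (k * L) with hr
    have hrlen : r.length = n - k * L := by simp [hr, hlen c hc]
    have hc_split : l0.flatten ++ r = c := by rw [hfl, hr]; exact List.take_append_drop _ _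
    have hc'_split : l0'.flatten ++ r = c' := by
      rw [hfl', hrem]; exact List.take_append_drop _ _
    by_cases hre : r = []
    · have h1 : l0.flatten = c := by rw [← hc_split, hre, List.append_nil]
      have h2 : l0'.flatten = c' := by rw [← hc'_split, hre, List.append_nil]
      have hlenle : l0.length ≤ t + 1 := by
        rcases hfrag with h | ⟨hk, hnL⟩ <;> omega
      refine key hres hc hc' l0 l0' hp hn0 (by omega) hlenle
        (by rw [h1, hlen c hc]; omega)
        (by rw [h1, editDist_self]; exact Nat.zero_le te) (by rw [h2, editDist_self]; exact Nat.zero_le te)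
    · have hrpos : 0 < r.length := List.length_pos_iff.2 hre
      have hfl1 : (l0 ++ [r]).flatten = c := by
        rw [List.flatten_append, List.flatten_cons, List.flatten_nil, List.append_nil, hc_split]
      have hfl2 : (l0' ++ [r]).flatten = c' := by
        rw [List.flatten_append, List.flatten_cons, List.flatten_nil, List.append_nil, hc'_split]
      have hlenle : (l0 ++ [r]).length ≤ t + 1 := by
        rcases hfrag with h | ⟨hk, hnL⟩
        · simp only [List.length_append, List.length_cons, List.length_nil]
          omega
        · exfalso
          apply hre
          rw [← List.length_eq_zero_iff, hrlen, hk, one_mul]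
          omega
      refine key hres hc hc' (l0 ++ [r]) (l0' ++ [r]) (hp.append_right [r]) ?_
        (by simp) hlenle (by rw [hfl1, hlen c hc]; omega)
        (by rw [hfl1, editDist_self]; exact Nat.zero_le te) (by rw [hfl2, editDist_self]; exact Nat.zero_le te)
      intro f hf2
      rcases List.mem_append.1 hf2 with hf2 | hf2
      · exact hn0 f hf2
      · rw [List.mem_singleton] at hf2
        rw [hf2]
        exact hre
  calc C.card ≤ ((Fintype.piFinset fun _ : Fin k => QL L) ×ˢ WL (n - k * L)).card :=
        Finset.card_le_card_of_injOn Φ himg hinj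
    _ = (QL L).card ^ k * 2 ^ (n - k * L) := by
        rw [Finset.card_product, Fintype.card_piFinset]
        simp [card_WL]


lemma pow_le_pow_mul_choose : ∀ (k n : ℕ), k ≤ n → n ^ k ≤ k ^ k * n.choose k := by
  intro k
  induction k with
  | zero => intro n _; simp
  | succ k ih =>
    intro n hkn
    obtain ⟨m, rfl⟩ : ∃ m, n = m + 1 := ⟨n - 1, by omega⟩
    have hkm : k ≤ m := by omega
    have hid : (m + 1) * Nat.choose m k = Nat.choose (m + 1) (k + 1) * (k + 1) :=
      Nat.add_one_mul_choose_eq m k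
    have hclaim : (m + 1) ^ k ≤ (k + 1) ^ k * Nat.choose m k := by
      rcases Nat.eq_zero_or_pos k with rfl | hk
      · simp
      · have hmk : 0 < m := by omega
        have h1 : ((m + 1) * k) ^ k ≤ ((k + 1) * m) ^ k := by
          apply Nat.pow_le_pow_left
          nlinarith
        have h2 : (m + 1) ^ k * k ^ k ≤ (k + 1) ^ k * m ^ k := by
          rw [← Nat.mul_pow, ← Nat.mul_pow]; exact h1
        have h3 : (m + 1) ^ k * k ^ k ≤ (k + 1) ^ k * (k ^ k * Nat.choose m k) :=
          le_trans h2 (Nat.mul_le_mul_left _ (ih m hkm))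
        have h4 : (m + 1) ^ k * k ^ k ≤ ((k + 1) ^ k * Nat.choose m k) * k ^ k := by
          calc (m + 1) ^ k * k ^ k ≤ (k + 1) ^ k * (k ^ k * Nat.choose m k) := h3
            _ = ((k + 1) ^ k * Nat.choose m k) * k ^ k := by ring
        exact Nat.le_of_mul_le_mul_right h4 (Nat.pow_pos hk)
    calc (m + 1) ^ (k + 1) = (m + 1) ^ k * (m + 1) := by ring
      _ ≤ ((k + 1) ^ k * Nat.choose m k) * (m + 1) := Nat.mul_le_mul_right _ hclaim
      _ = (k + 1) ^ k * ((m + 1) * Nat.choose m k) := by ring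
      _ = (k + 1) ^ k * (Nat.choose (m + 1) (k + 1) * (k + 1)) := by rw [hid]
      _ = (k + 1) ^ (k + 1) * Nat.choose (m + 1) (k + 1) := by ring

lemma sq_le_two_pow_half {L : ℕ} (hL : 40 ≤ L) : L ^ 2 ≤ 2 ^ (L / 2) := by
  have haux : ∀ j, 20 ≤ j → (2 * j + 1) ^ 2 ≤ 2 ^ j := by
    intro j hj
    induction j with
    | zero => omega
    | succ j ih =>
      rcases Nat.lt_or_ge j 20 with h | h
      · have hj20 : j + 1 = 20 := by omega
        rw [hj20]
        norm_num
      · have := ih (by omega)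
        have hstep : (2 * (j + 1) + 1) ^ 2 ≤ 2 * (2 * j + 1) ^ 2 := by nlinarith
        calc (2 * (j + 1) + 1) ^ 2 ≤ 2 * (2 * j + 1) ^ 2 := hstep
          _ ≤ 2 * 2 ^ j := by omega
          _ = 2 ^ (j + 1) := by ring
  have h1 : 20 ≤ L / 2 := by omega
  have h2 : L ≤ 2 * (L / 2) + 1 := by omega
  calc L ^ 2 ≤ (2 * (L / 2) + 1) ^ 2 := Nat.pow_le_pow_left h2 2
    _ ≤ 2 ^ (L / 2) := haux _ h1

lemma card_le_pred {n t te : ℕ} (hn : 2 ≤ n) (h1 : 1 ≤ t + te) (hn2 : t + 1 ≤ n)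
    (C : Finset (List Bool)) (hlen : ∀ w ∈ C, w.length = n) (hres : ResilientBE t te C) :
    C.card ≤ 2 ^ n - 1 := by
  classical
  have hCsub : C ⊆ WL n := fun c hc => mem_WL.2 (hlen c hc)
  obtain ⟨x, y, hxne, hyne, hxy, hnot⟩ :
      ∃ x y : List Bool, x.length = n ∧ y.length = n ∧ x ≠ y ∧ ¬(x ∈ C ∧ y ∈ C) := by
    rcases Nat.eq_zero_or_pos t with rfl | ht
    · -- te ≥ 1
      have hte : 1 ≤ te := by omega
      refine ⟨List.replicate n false, List.replicate (n-1) false ++ [true], by simp,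
        by simp; omega, ?_, ?_⟩
      · intro he
        have : true ∈ List.replicate n false := by rw [he]; simp
        simp at this
      · rintro ⟨hx, hy⟩
        have hxr : List.replicate n false = List.replicate (n-1) false ++ [false] := by
          rw [← List.replicate_succ']
          congr 1
          omega
        have := key hres hx hy [List.replicate n false] [List.replicate n false]
          (List.Perm.refl _) (by intro f hf; simp at hf; subst hf; simp; omega)
          (by simp) (by simp) (by simp; omega)
          (by simp [editDist_self])
          (by
            simp only [List.flatten_cons, List.flatten_nil, List.append_nil]
            rw [hxr]
            exact le_trans (editDist_append_last_le _ _ _) hte)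
        rw [this] at hxr
        have : true ∈ List.replicate (n-1) false ++ [false] := by rw [← hxr]; simp
        simp at this
    · -- t ≥ 1
      refine ⟨true :: List.replicate (n-1) false, List.replicate (n-1) false ++ [true],
        by simp; omega, by simp; omega, ?_, ?_⟩
      · obtain ⟨p, hp⟩ : ∃ p, n - 1 = p + 1 := ⟨n - 2, by omega⟩
        rw [hp, List.replicate_succ]
        simp
      · rintro ⟨hx, hy⟩
        have hrep_ne : List.replicate (n-1) false ≠ [] := by
          intro he
          have := congrArg List.length he
          simp at this
          omega
        have hkey := key hres hx hy [[true], List.replicate (n-1) false]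
          [List.replicate (n-1) false, [true]]
          (List.Perm.swap _ _ _)
          (by
            intro f hf
            simp only [List.mem_cons, List.mem_singleton] at hf
            rcases hf with rfl | rfl | h
            · simp
            · exact hrep_ne
            · simp at h)
          (by simp) (by simp; omega) (by simp; omega)
          (by simp [editDist_self]) (by simp [editDist_self])
        obtain ⟨p, hp⟩ : ∃ p, n - 1 = p + 1 := ⟨n - 2, by omega⟩
        rw [hp, List.replicate_succ] at hkey
        simp at hkey
  have hxW : x ∈ WL n := mem_WL.2 hxne
  have : x ∉ C ∨ y ∉ C := by tauto
  rcases this with h | h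
  · calc C.card ≤ ((WL n).erase x).card := Finset.card_le_card (fun c hc =>
        Finset.mem_erase.2 ⟨fun he => h (he ▸ hc), hCsub hc⟩)
      _ = 2 ^ n - 1 := by rw [Finset.card_erase_of_mem hxW, card_WL]
  · have hyW : y ∈ WL n := mem_WL.2 hyne
    calc C.card ≤ ((WL n).erase y).card := Finset.card_le_card (fun c hc =>
        Finset.mem_erase.2 ⟨fun he => h (he ▸ hc), hCsub hc⟩)
      _ = 2 ^ n - 1 := by rw [Finset.card_erase_of_mem hyW, card_WL]


open Real

lemma ql_real {L : ℕ} (hL : 40 ≤ L) : ((QL L).card : ℝ) ≤ 2 ^ (L + 1) / L := by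
  have h0 : 0 < L := by omega
  have h1 := card_QL h0
  have hnat : L ^ 2 * 2 ^ (L / 2) ≤ 2 ^ L := by
    calc L ^ 2 * 2 ^ (L / 2) ≤ 2 ^ (L / 2) * 2 ^ (L / 2) :=
          Nat.mul_le_mul_right _ (sq_le_two_pow_half hL)
      _ = 2 ^ (L / 2 + L / 2) := by rw [pow_add]
      _ ≤ 2 ^ L := Nat.pow_le_pow_right (by norm_num) (by omega)
  have hLpos : (0:ℝ) < L := by exact_mod_cast h0
  have hc1 : ((2 ^ L / L : ℕ) : ℝ) ≤ (2:ℝ) ^ L / L := by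
    have := Nat.cast_div_le (α := ℝ) (m := 2 ^ L) (n := L)
    push_cast at this
    exact this
  have hc2 : ((L * 2 ^ (L / 2) : ℕ) : ℝ) ≤ (2:ℝ) ^ L / L := by
    rw [le_div_iff₀ hLpos]
    have : (L * 2 ^ (L / 2)) * L ≤ 2 ^ L := by
      calc (L * 2 ^ (L / 2)) * L = L ^ 2 * 2 ^ (L / 2) := by ring
        _ ≤ 2 ^ L := hnat
    exact_mod_cast this
  calc ((QL L).card : ℝ) ≤ ((2 ^ L / L + L * 2 ^ (L / 2) : ℕ) : ℝ) := by exact_mod_cast h1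
    _ = ((2 ^ L / L : ℕ) : ℝ) + ((L * 2 ^ (L / 2) : ℕ) : ℝ) := by push_cast; ring
    _ ≤ (2:ℝ) ^ L / L + (2:ℝ) ^ L / L := add_le_add hc1 hc2
    _ = 2 ^ (L + 1) / L := by rw [pow_succ]; ring

theorem redundancy_lower_bound_polynomial_regime :
    ∀ ε : ℝ, 0 < ε → ε < 1 →
      ∃ c : ℝ, 0 < c ∧
        ∀ n t te : ℕ, 2 ≤ n → 1 ≤ t + te →
          ((t + te : ℕ) : ℝ) ≤ (n : ℝ) ^ (1 - ε) → t + 1 ≤ n →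
          ∀ C : Finset (List Bool),
            (∀ w ∈ C, w.length = n) → ResilientBE t te C →
            c * ((t + te : ℕ) : ℝ) * Real.logb 2 (n : ℝ)
              ≤ (n : ℝ) - Real.logb 2 (C.card : ℝ) := by
  intro ε hε0 hε1
  set N₁ : ℝ := ((2:ℝ) ^ (20:ℕ)) ^ (1/ε) with hN₁
  have hN₁pos : 0 < N₁ := by positivity
  set T : ℕ := ⌈N₁⌉₊ + 2 with hT
  have hTpos : (0:ℝ) < T := by positivity
  set c : ℝ := min (ε/12) (min (ε * Real.log 2) ((2:ℝ) ^ (-(T:ℝ)) / ((T:ℝ)^2 + 1))) with hc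
  have hcpos : 0 < c := by
    apply lt_min (by positivity)
    apply lt_min
    · exact mul_pos hε0 (Real.log_pos (by norm_num))
    · positivity
  refine ⟨c, hcpos, ?_⟩
  intro n t te hn2 hste hpoly htn C hlen hres
  have lmono : ∀ {x y : ℝ}, 0 < x → x ≤ y → Real.logb 2 x ≤ Real.logb 2 y := by
    intro x y hx hxy
    exact Real.logb_le_logb_of_le (by norm_num) hx hxy
  have hlogb22 : Real.logb 2 (2:ℝ) = 1 := Real.logb_self_eq_one (by norm_num)
  have hn1 : (1:ℝ) ≤ (n:ℝ) := by exact_mod_cast (by omega : 1 ≤ n)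
  have hnpos : (0:ℝ) < n := by linarith
  have hlogn0 : 0 ≤ Real.logb 2 (n:ℝ) := Real.logb_nonneg (by norm_num) hn1
  have hs0 : (0:ℝ) ≤ ((t + te : ℕ) : ℝ) := by positivity
  -- basic: (t+te) ≤ n
  have hsn : ((t + te : ℕ) : ℝ) ≤ (n:ℝ) := by
    refine le_trans hpoly ?_
    calc (n:ℝ) ^ (1 - ε) ≤ (n:ℝ) ^ (1:ℝ) :=
          Real.rpow_le_rpow_of_exponent_le hn1 (by linarith)
      _ = n := Real.rpow_one _
  -- epsilon-log fact : ε * log n ≤ n^ε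
  have hlog_rpow : ε * Real.log n ≤ (n:ℝ) ^ ε := by
    have h1 : Real.log ((n:ℝ) ^ ε) = ε * Real.log n := Real.log_rpow hnpos ε
    have h2 : Real.log ((n:ℝ) ^ ε) ≤ (n:ℝ) ^ ε := by
      have hx : (0:ℝ) < (n:ℝ) ^ ε := by positivity
      linarith [Real.log_le_sub_one_of_pos hx]
    linarith
  -- t * n^ε ≤ n and te * n^ε ≤ n
  have hmul : ∀ s : ℕ, s ≤ t + te → (s:ℝ) * (n:ℝ) ^ ε ≤ n := by
    intro s hs
    have hs' : (s:ℝ) ≤ ((t + te : ℕ) : ℝ) := by exact_mod_cast hs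
    have h1 : (s:ℝ) * (n:ℝ) ^ ε ≤ (n:ℝ) ^ (1 - ε) * (n:ℝ) ^ ε := by
      apply mul_le_mul_of_nonneg_right (le_trans hs' hpoly) (by positivity)
    calc (s:ℝ) * (n:ℝ) ^ ε ≤ (n:ℝ) ^ (1 - ε) * (n:ℝ) ^ ε := h1
      _ = (n:ℝ) ^ ((1 - ε) + ε) := (Real.rpow_add hnpos _ _).symm
      _ = (n:ℝ) ^ (1:ℝ) := by norm_num
      _ = n := Real.rpow_one _
  -- CASE 0 : C.card ≤ 1
  by_cases hC1 : C.card ≤ 1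
  · have hlogC : Real.logb 2 (C.card : ℝ) ≤ 0 := by
      apply Real.logb_nonpos (by norm_num) (by positivity)
      exact_mod_cast hC1
    have hmain : c * ((t + te : ℕ) : ℝ) * Real.logb 2 (n:ℝ) ≤ (n:ℝ) := by
      have hcle : c ≤ ε * Real.log 2 := le_trans (min_le_right _ _) (min_le_left _ _)
      have hlog2pos : 0 < Real.log 2 := Real.log_pos (by norm_num)
      have h1 : c * ((t + te : ℕ) : ℝ) * Real.logb 2 (n:ℝ)
          ≤ (ε * Real.log 2) * ((t + te : ℕ) : ℝ) * Real.logb 2 (n:ℝ) := by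
        apply mul_le_mul_of_nonneg_right _ hlogn0
        exact mul_le_mul_of_nonneg_right hcle hs0
      have h2 : (ε * Real.log 2) * ((t + te : ℕ) : ℝ) * Real.logb 2 (n:ℝ)
          = ((t + te : ℕ) : ℝ) * (ε * Real.log n) := by
        rw [Real.logb]
        field_simp
      have h3 : ((t + te : ℕ) : ℝ) * (ε * Real.log n) ≤ ((t + te : ℕ) : ℝ) * (n:ℝ) ^ ε :=
        mul_le_mul_of_nonneg_left hlog_rpow hs0
      have h4 : ((t + te : ℕ) : ℝ) * (n:ℝ) ^ ε ≤ n := hmul (t + te) le_rfl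
      linarith
    linarith
  · push_neg at hC1
    have hCpos : (0:ℝ) < (C.card : ℝ) := by exact_mod_cast (by omega : 0 < C.card)
    have hC2 : (2:ℝ) ≤ (C.card : ℝ) := by exact_mod_cast hC1
    by_cases hsmall : (n:ℝ) < N₁
    · -- small n
      have hnT : n ≤ T := by
        have h1 : (n:ℝ) ≤ (⌈N₁⌉₊ : ℝ) := le_trans hsmall.le (Nat.le_ceil _)
        have : (n:ℝ) ≤ (T:ℝ) := by
          rw [hT]; push_cast; linarith
        exact_mod_cast this
      -- R ≥ 2^{-n}
      have hcard : (C.card : ℝ) ≤ (2:ℝ) ^ n - 1 := by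
        have h1 := card_le_pred hn2 hste htn C hlen hres
        have h2 : ((2 ^ n - 1 : ℕ) : ℝ) = (2:ℝ) ^ n - 1 := by
          have : 1 ≤ 2 ^ n := Nat.one_le_two_pow
          push_cast [this]
          ring
        calc (C.card : ℝ) ≤ ((2 ^ n - 1 : ℕ) : ℝ) := by exact_mod_cast h1
          _ = (2:ℝ) ^ n - 1 := h2
      have hx : (0:ℝ) < (2:ℝ) ^ (-(n:ℝ)) := by positivity
      have hR : (2:ℝ) ^ (-(n:ℝ)) ≤ (n:ℝ) - Real.logb 2 (C.card : ℝ) := by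
        have hkey : (2:ℝ) ^ n - 1 ≤ (2:ℝ) ^ ((n:ℝ) - (2:ℝ) ^ (-(n:ℝ))) := by
          set x : ℝ := (2:ℝ) ^ (-(n:ℝ)) with hxdef
          have h2 : (2:ℝ) ^ ((n:ℝ) - x) = (2:ℝ) ^ (n:ℝ) * (2:ℝ) ^ (-x) := by
            rw [← Real.rpow_add (by norm_num)]
            ring_nf
          have h3 : (1:ℝ) - x * Real.log 2 ≤ (2:ℝ) ^ (-x) := by
            have := Real.add_one_le_exp (-(x * Real.log 2))
            have he : (2:ℝ) ^ (-x) = Real.exp (-(x * Real.log 2)) := by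
              rw [Real.rpow_def_of_pos (by norm_num)]
              congr 1
              ring
            rw [he]
            linarith
          have h4 : (2:ℝ) ^ (n:ℝ) = (2:ℝ) ^ n := by
            rw [Real.rpow_natCast]
          have h5 : (2:ℝ) ^ (n:ℝ) * x = 1 := by
            rw [hxdef, ← Real.rpow_add (by norm_num)]
            simp
          have hlog2 : Real.log 2 ≤ 1 := by
            have := Real.log_le_sub_one_of_pos (by norm_num : (0:ℝ) < 2)
            linarith
          have h2npos : (0:ℝ) < (2:ℝ) ^ (n:ℝ) := by positivity
          calc (2:ℝ) ^ n - 1 = (2:ℝ) ^ (n:ℝ) - 1 := by rw [h4]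
            _ ≤ (2:ℝ) ^ (n:ℝ) - Real.log 2 := by linarith
            _ = (2:ℝ) ^ (n:ℝ) * (1 - x * Real.log 2) := by
                rw [mul_sub, mul_one, mul_comm x (Real.log 2), ← mul_assoc]
                rw [show (2:ℝ) ^ (n:ℝ) * Real.log 2 * x = Real.log 2 * ((2:ℝ) ^ (n:ℝ) * x) by ring, h5]
                ring
            _ ≤ (2:ℝ) ^ (n:ℝ) * (2:ℝ) ^ (-x) := by
                apply mul_le_mul_of_nonneg_left h3 (le_of_lt h2npos)
            _ = (2:ℝ) ^ ((n:ℝ) - x) := h2.symm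
        have h6 : Real.logb 2 (C.card : ℝ) ≤ (n:ℝ) - (2:ℝ) ^ (-(n:ℝ)) := by
          calc Real.logb 2 (C.card : ℝ) ≤ Real.logb 2 ((2:ℝ) ^ ((n:ℝ) - (2:ℝ) ^ (-(n:ℝ)))) := by
                apply lmono hCpos
                exact le_trans hcard hkey
            _ = (n:ℝ) - (2:ℝ) ^ (-(n:ℝ)) := Real.logb_rpow (by norm_num) (by norm_num)
        linarith
      -- LHS ≤ 2^{-n}
      have hlhs : c * ((t + te : ℕ) : ℝ) * Real.logb 2 (n:ℝ) ≤ (2:ℝ) ^ (-(n:ℝ)) := by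
        have hcle : c ≤ (2:ℝ) ^ (-(T:ℝ)) / ((T:ℝ)^2 + 1) :=
          le_trans (min_le_right _ _) (min_le_right _ _)
        have hlogle : Real.logb 2 (n:ℝ) ≤ (T:ℝ) := by
          have h1 : (n:ℝ) ≤ (2:ℝ) ^ (n:ℕ) := by
            exact_mod_cast (Nat.lt_two_pow_self (n := n)).le
          calc Real.logb 2 (n:ℝ) ≤ Real.logb 2 ((2:ℝ) ^ (n:ℕ)) :=
                lmono hnpos h1
            _ = (n:ℕ) * Real.logb 2 2 := Real.logb_pow 2 2 n
            _ = n := by rw [hlogb22]; ring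
            _ ≤ T := by exact_mod_cast hnT
        have hsT : ((t + te : ℕ) : ℝ) ≤ (T:ℝ) := le_trans hsn (by exact_mod_cast hnT)
        have h2 : c * ((t + te : ℕ) : ℝ) * Real.logb 2 (n:ℝ)
            ≤ ((2:ℝ) ^ (-(T:ℝ)) / ((T:ℝ)^2 + 1)) * (T:ℝ) * (T:ℝ) := by
          apply mul_le_mul
          · apply mul_le_mul hcle hsT hs0 (by positivity)
          · exact hlogle
          · exact hlogn0
          · positivity
        have h3 : ((2:ℝ) ^ (-(T:ℝ)) / ((T:ℝ)^2 + 1)) * (T:ℝ) * (T:ℝ) ≤ (2:ℝ) ^ (-(T:ℝ)) := by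
          rw [div_mul_eq_mul_div, div_mul_eq_mul_div, div_le_iff₀ (by positivity)]
          have hT2 : (T:ℝ)^2 ≤ (T:ℝ)^2 + 1 := by linarith
          calc (2:ℝ) ^ (-(T:ℝ)) * (T:ℝ) * (T:ℝ) = (2:ℝ) ^ (-(T:ℝ)) * (T:ℝ)^2 := by ring
            _ ≤ (2:ℝ) ^ (-(T:ℝ)) * ((T:ℝ)^2 + 1) := by
                apply mul_le_mul_of_nonneg_left hT2 (by positivity)
        have h4 : (2:ℝ) ^ (-(T:ℝ)) ≤ (2:ℝ) ^ (-(n:ℝ)) := by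
          apply Real.rpow_le_rpow_of_exponent_le (by norm_num)
          have : (n:ℝ) ≤ (T:ℝ) := by exact_mod_cast hnT
          linarith
        linarith
      linarith
    · -- large n
      push_neg at hsmall
      have hn20 : (2:ℝ) ^ (20:ℕ) ≤ (n:ℝ) ^ ε := by
        have h1 : N₁ ^ ε ≤ (n:ℝ) ^ ε :=
          Real.rpow_le_rpow (le_of_lt hN₁pos) hsmall (le_of_lt hε0)
        have h2 : N₁ ^ ε = (2:ℝ) ^ (20:ℕ) := by
          rw [hN₁, ← Real.rpow_mul (by positivity), one_div_mul_cancel (ne_of_gt hε0),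
            Real.rpow_one]
        linarith [h2 ▸ h1]
      have hεlogn : 20 ≤ ε * Real.logb 2 (n:ℝ) := by
        have h1 : Real.logb 2 ((2:ℝ) ^ (20:ℕ)) ≤ Real.logb 2 ((n:ℝ) ^ ε) :=
          lmono (by positivity) hn20
        have h2 : Real.logb 2 ((2:ℝ) ^ (20:ℕ)) = 20 := by
          rw [Real.logb_pow, hlogb22]
          norm_num
        have h3 : Real.logb 2 ((n:ℝ) ^ ε) = ε * Real.logb 2 (n:ℝ) := by
          rw [Real.logb, Real.logb, Real.log_rpow hnpos]
          ring
        linarith [h3 ▸ h2 ▸ h1]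
      -- R ≥ 0 preliminaries
      have hcard2n : (C.card : ℝ) ≤ (2:ℝ) ^ n := by
        have h1 : C.card ≤ 2 ^ n := by
          have := Finset.card_le_card (fun c hc => mem_WL.2 (hlen c hc))
          rw [card_WL] at this
          exact this
        exact_mod_cast h1
      have hlogC_le_n : Real.logb 2 (C.card : ℝ) ≤ (n:ℝ) := by
        calc Real.logb 2 (C.card : ℝ) ≤ Real.logb 2 ((2:ℝ) ^ n) :=
              lmono hCpos hcard2n
          _ = n := by rw [Real.logb_pow, hlogb22]; ring
      -- Bound A : R ≥ ε * te * logb n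
      have hA : ε * te * Real.logb 2 (n:ℝ) ≤ (n:ℝ) - Real.logb 2 (C.card : ℝ) := by
        have hteR : (te:ℝ) ≤ (n:ℝ) ^ (1-ε) := by
          refine le_trans ?_ hpoly
          push_cast
          linarith [Nat.cast_nonneg (α := ℝ) t]
        have hten : te ≤ n := by
          have : (te:ℝ) ≤ (n:ℝ) := by
            refine le_trans hteR ?_
            calc (n:ℝ) ^ (1 - ε) ≤ (n:ℝ) ^ (1:ℝ) :=
                  Real.rpow_le_rpow_of_exponent_le hn1 (by linarith)
              _ = n := Real.rpow_one _
          exact_mod_cast this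
        have hch := caseA htn C hlen hres
        have hchpos : 0 < n.choose te := Nat.choose_pos hten
        have hlog_split : Real.logb 2 (C.card : ℝ) + Real.logb 2 (n.choose te : ℝ) ≤ (n:ℝ) := by
          have h1 : (C.card : ℝ) * (n.choose te : ℝ) ≤ (2:ℝ) ^ n := by exact_mod_cast hch
          have h2 : Real.logb 2 ((C.card : ℝ) * (n.choose te : ℝ)) ≤ Real.logb 2 ((2:ℝ) ^ n) :=
            lmono (by positivity) h1
          rw [Real.logb_mul (ne_of_gt hCpos) (by positivity)] at h2
          calc Real.logb 2 (C.card : ℝ) + Real.logb 2 (n.choose te : ℝ) ≤ Real.logb 2 ((2:ℝ)^n) := h2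
            _ = n := by rw [Real.logb_pow, hlogb22]; ring
        have hchoose_low : ε * te * Real.logb 2 (n:ℝ) ≤ Real.logb 2 (n.choose te : ℝ) := by
          rcases Nat.eq_zero_or_pos te with rfl | hte1
          · simp
          · have htepos : (0:ℝ) < te := by exact_mod_cast hte1
            have hdiv : (n:ℝ) ^ ε ≤ (n:ℝ) / te := by
              rw [le_div_iff₀ htepos]
              calc (n:ℝ) ^ ε * te = (te:ℝ) * (n:ℝ) ^ ε := by ring
                _ ≤ n := hmul te (by omega)
            have hcb : ((n:ℝ) / te) ^ te ≤ (n.choose te : ℝ) := by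
              have h1 : (n:ℕ) ^ te ≤ te ^ te * n.choose te := pow_le_pow_mul_choose te n hten
              have h2 : ((n:ℝ)) ^ te ≤ (te:ℝ) ^ te * (n.choose te : ℝ) := by exact_mod_cast h1
              rw [div_pow, div_le_iff₀ (by positivity)]
              calc ((n:ℝ)) ^ te ≤ (te:ℝ) ^ te * (n.choose te : ℝ) := h2
                _ = (n.choose te : ℝ) * (te:ℝ) ^ te := by ring
            have h3 : ((n:ℝ) ^ ε) ^ te ≤ (n.choose te : ℝ) := by
              refine le_trans ?_ hcb
              apply pow_le_pow_left₀ (by positivity) hdiv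
            have h4 : Real.logb 2 (((n:ℝ) ^ ε) ^ te) ≤ Real.logb 2 (n.choose te : ℝ) :=
              lmono (by positivity) h3
            have h5 : Real.logb 2 (((n:ℝ) ^ ε) ^ te) = ε * te * Real.logb 2 (n:ℝ) := by
              rw [Real.logb_pow, Real.logb, Real.log_rpow hnpos, Real.logb]
              ring
            linarith [h5 ▸ h4]
        have hlogch_nonneg : 0 ≤ Real.logb 2 (n.choose te : ℝ) :=
          Real.logb_nonneg (by norm_num) (by exact_mod_cast hchpos)
        linarith
      -- Bound B : R ≥ (ε/6) * t * logb n
      have hB : (ε/6) * t * Real.logb 2 (n:ℝ) ≤ (n:ℝ) - Real.logb 2 (C.card : ℝ) := by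
        rcases Nat.eq_zero_or_pos t with rfl | ht1
        · simp only [Nat.cast_zero, mul_zero, zero_mul]
          linarith
        · -- t ≥ 1
          set k : ℕ := max 1 (t / 2) with hk
          set L : ℕ := n / k with hL
          have hk1 : 1 ≤ k := le_max_left _ _
          have hkt : k ≤ t := by omega
          have h3k : t ≤ 3 * k := by omega
          have hkL : k * L ≤ n := by rw [hL]; exact Nat.mul_div_le n k
          have hfrag : 2 * k ≤ t ∨ (k = 1 ∧ n = L) := by
            rcases Nat.lt_or_ge t 2 with h | h
            · right
              have hk1' : k = 1 := by omega
              refine ⟨hk1', ?_⟩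
              rw [hL, hk1', Nat.div_one]
            · left
              omega
          -- L lower bound (real)
          have hkpos : (0:ℝ) < k := by exact_mod_cast hk1
          have htpos : (0:ℝ) < t := by exact_mod_cast ht1
          have hdm : n < k * L + k := by
            rw [hL]
            have := Nat.div_add_mod n k
            have := Nat.mod_lt n (show 0 < k by omega)
            omega
          have hLlb : (n:ℝ) / t - 1 ≤ (L:ℝ) := by
            have h1 : (n:ℝ) < (k:ℝ) * L + k := by exact_mod_cast hdm
            have h2 : (n:ℝ) / k - 1 ≤ (L:ℝ) := by
              rw [div_sub_one (ne_of_gt hkpos), div_le_iff₀ hkpos]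
              ring_nf
              ring_nf at h1
              linarith
            refine le_trans ?_ h2
            have : (n:ℝ) / t ≤ (n:ℝ) / k := by
              apply div_le_div_of_nonneg_left (by linarith) hkpos
              exact_mod_cast hkt
            linarith
          have hnt : (n:ℝ) ^ ε ≤ (n:ℝ) / t := by
            rw [le_div_iff₀ htpos]
            calc (n:ℝ) ^ ε * t = (t:ℝ) * (n:ℝ) ^ ε := by ring
              _ ≤ n := hmul t (by omega)
          have hLlb2 : (n:ℝ) ^ ε - 1 ≤ (L:ℝ) := by linarith
          have hL40 : 40 ≤ L := by
            have h20 : (2:ℝ)^(20:ℕ) = 1048576 := by norm_num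
            have : (40:ℝ) ≤ (L:ℝ) := by
              rw [h20] at hn20
              linarith
            exact_mod_cast this
          have hL1 : 1 ≤ L := by omega
          have hLhalf : (n:ℝ) ^ ε / 2 ≤ (L:ℝ) := by
            have h2 : (2:ℝ) ≤ (n:ℝ) ^ ε := by
              have : (2:ℝ) ≤ (2:ℝ)^(20:ℕ) := by norm_num
              linarith
            linarith
          -- apply caseB
          have hcb := caseB C ht1 htn hk1 hL1 hkL hfrag hlen hres
          have hql := ql_real hL40
          have hLposR : (0:ℝ) < (L:ℝ) := by exact_mod_cast (by omega : 0 < L)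
          have hqlpos : (0:ℝ) < (2:ℝ) ^ (L+1) / L := by positivity
          have hQLpos : 0 < (QL L).card := by
            rcases Nat.eq_zero_or_pos (QL L).card with h0 | h0
            · exfalso
              rw [h0] at hcb
              rw [zero_pow (by omega : k ≠ 0), Nat.zero_mul] at hcb
              omega
            · exact h0
          -- logb |C| ≤ k * logb (2^{L+1}/L) + (n - kL)
          have hlogC : Real.logb 2 (C.card : ℝ)
              ≤ k * ((L:ℝ) + 1 - Real.logb 2 (L:ℝ)) + ((n:ℝ) - k * L) := by
            have h1 : (C.card : ℝ) ≤ ((QL L).card : ℝ) ^ k * (2:ℝ) ^ (n - k * L) := by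
              exact_mod_cast hcb
            have h2 : ((QL L).card : ℝ) ^ k ≤ ((2:ℝ) ^ (L+1) / L) ^ k :=
              pow_le_pow_left₀ (Nat.cast_nonneg _) hql k
            have h3 : (C.card : ℝ) ≤ ((2:ℝ) ^ (L+1) / L) ^ k * (2:ℝ) ^ (n - k * L) := by
              calc (C.card : ℝ) ≤ ((QL L).card : ℝ) ^ k * (2:ℝ) ^ (n - k * L) := h1
                _ ≤ ((2:ℝ) ^ (L+1) / L) ^ k * (2:ℝ) ^ (n - k * L) := by
                    apply mul_le_mul_of_nonneg_right h2 (by positivity)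
            have h4 := lmono hCpos h3
            rw [Real.logb_mul (by positivity) (by positivity), Real.logb_pow,
              Real.logb_pow, Real.logb_div (by positivity) (ne_of_gt hLposR),
              Real.logb_pow, hlogb22] at h4
            have h5 : ((n - k * L : ℕ) : ℝ) = (n:ℝ) - (k:ℝ) * L := by
              have : k * L ≤ n := hkL
              push_cast [this]
              ring
            calc Real.logb 2 (C.card : ℝ)
                ≤ (k:ℝ) * ((L + 1 : ℕ) * 1 - Real.logb 2 (L:ℝ)) + ((n - k*L : ℕ) : ℝ) * 1 := h4
              _ = k * ((L:ℝ) + 1 - Real.logb 2 (L:ℝ)) + ((n:ℝ) - k * L) := by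
                  rw [h5]; push_cast; ring
          -- logb L ≥ ε logb n - 1
          have hlogL : ε * Real.logb 2 (n:ℝ) - 1 ≤ Real.logb 2 (L:ℝ) := by
            have h1 : Real.logb 2 ((n:ℝ)^ε / 2) ≤ Real.logb 2 (L:ℝ) :=
              lmono (by positivity) hLhalf
            have h2 : Real.logb 2 ((n:ℝ)^ε / 2) = ε * Real.logb 2 (n:ℝ) - 1 := by
              rw [Real.logb_div (by positivity) (by norm_num),
                hlogb22]
              congr 1
              rw [Real.logb, Real.logb, Real.log_rpow hnpos]
              ring
            linarith [h2 ▸ h1]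
          have hR : (k:ℝ) * (Real.logb 2 (L:ℝ) - 1) ≤ (n:ℝ) - Real.logb 2 (C.card : ℝ) := by
            have : (n:ℝ) - (k * ((L:ℝ) + 1 - Real.logb 2 (L:ℝ)) + ((n:ℝ) - k * L))
                = k * (Real.logb 2 (L:ℝ) - 1) := by ring
            linarith
          have hfinal : (ε/6) * t * Real.logb 2 (n:ℝ) ≤ (k:ℝ) * (Real.logb 2 (L:ℝ) - 1) := by
            have h1 : (ε/2) * Real.logb 2 (n:ℝ) ≤ Real.logb 2 (L:ℝ) - 1 := by
              have : ε * Real.logb 2 (n:ℝ) - 2 ≥ (ε/2) * Real.logb 2 (n:ℝ) := by linarith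
              linarith
            have hkt3 : (t:ℝ) / 3 ≤ (k:ℝ) := by
              have : (t:ℝ) ≤ 3 * k := by exact_mod_cast h3k
              linarith
            calc (ε/6) * t * Real.logb 2 (n:ℝ) = ((t:ℝ)/3) * ((ε/2) * Real.logb 2 (n:ℝ)) := by
                  ring
              _ ≤ (k:ℝ) * ((ε/2) * Real.logb 2 (n:ℝ)) := by
                  apply mul_le_mul_of_nonneg_right hkt3
                  positivity
              _ ≤ (k:ℝ) * (Real.logb 2 (L:ℝ) - 1) := by
                  apply mul_le_mul_of_nonneg_left h1 (le_of_lt hkpos)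
          linarith
      -- combine
      have hcle : c ≤ ε/12 := min_le_left _ _
      have hcomb : (ε/12) * ((t + te : ℕ) : ℝ) * Real.logb 2 (n:ℝ)
          ≤ (n:ℝ) - Real.logb 2 (C.card : ℝ) := by
        have hsum : (ε/6) * ((t + te : ℕ) : ℝ) * Real.logb 2 (n:ℝ)
            ≤ (ε * te + (ε/6) * t) * Real.logb 2 (n:ℝ) := by
          apply mul_le_mul_of_nonneg_right _ hlogn0
          push_cast
          nlinarith [Nat.cast_nonneg (α := ℝ) t, Nat.cast_nonneg (α := ℝ) te]
        have h2 : (ε * te + (ε/6) * t) * Real.logb 2 (n:ℝ)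
            ≤ 2 * ((n:ℝ) - Real.logb 2 (C.card : ℝ)) := by
          have := hA
          have := hB
          ring_nf
          ring_nf at hA hB ⊢
          linarith
        have h3 : (ε/12) * ((t + te : ℕ) : ℝ) * Real.logb 2 (n:ℝ)
            = ((ε/6) * ((t + te : ℕ) : ℝ) * Real.logb 2 (n:ℝ)) / 2 := by ring
        rw [h3]
        linarith
      have : c * ((t + te : ℕ) : ℝ) * Real.logb 2 (n:ℝ)
          ≤ (ε/12) * ((t + te : ℕ) : ℝ) * Real.logb 2 (n:ℝ) := by
        apply mul_le_mul_of_nonneg_right _ hlogn0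
        exact mul_le_mul_of_nonneg_right hcle hs0
      linarith
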